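/- Let Γ be a Jordan group containing a nontrivial finite subgroup. Then the group (Γ × Γ) ⋊ ℤ/2ℤ, where the nontrivial element of ℤ/2ℤ swaps the factors, is Jordan with Jordan constant equal to 2·J(Γ)². -/

import Mathlib

/-- The factor-swapping automorphism of G × G. -/
def swapAut (G : Type*) [Group G] : MulAut (G × G) :=
  (MulEquiv.prodComm : (G × G) ≃* (G × G))

theorem swapAut_sq (G : Type*) [Group G] : swapAut G ^ 2 = 1 := by
  ext x <;> simp [swapAut, pow_succ]

/-- The action of ℤ/2ℤ on G × G where the nontrivial element swaps the factors. -/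
def swapAction (G : Type*) [Group G] : Multiplicative (ZMod 2) →* MulAut (G × G) :=
  MonoidHom.mk' (fun z => swapAut G ^ (Multiplicative.toAdd z).val)
    (fun z w => by
      simp only [toAdd_mul, ZMod.val_add]
      rw [← pow_eq_pow_mod _ (swapAut_sq G), pow_add])

/-- The Jordan constant of a finite group: the least index of a normal abelian
subgroup. -/
noncomputable def jordanConstantFin (G : Type*) [Group G] : ℕ :=
  sInf {k | ∃ A : Subgroup G, A.Normal ∧ IsMulCommutative A ∧ A.index = k}

/-- The set of Jordan constants of finite subgroups of Γ. -/
def jordanSet (Γ : Type*) [Group Γ] : Set ℕ :=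
  {m | ∃ K : Subgroup Γ, (K : Set Γ).Finite ∧ jordanConstantFin ↥K = m}

/-- A group is Jordan if the Jordan constants of its finite subgroups are bounded. -/
def IsJordanGroup (Γ : Type*) [Group Γ] : Prop := BddAbove (jordanSet Γ)

/-- The Jordan constant of a Jordan group. -/
noncomputable def jordanConstant (Γ : Type*) [Group Γ] : ℕ := sSup (jordanSet Γ)

section JCF

variable {G : Type*} [Group G]

lemma jcf_nonempty :
    {k | ∃ A : Subgroup G, A.Normal ∧ IsMulCommutative A ∧ A.index = k}.Nonempty :=
  ⟨(⊥ : Subgroup G).index, ⊥, inferInstance,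
    ⟨⟨fun a b => Subsingleton.elim _ _⟩⟩, rfl⟩

lemma jcf_le {A : Subgroup G} (hn : A.Normal) (hc : IsMulCommutative A) :
    jordanConstantFin G ≤ A.index :=
  Nat.sInf_le ⟨A, hn, hc, rfl⟩

lemma exists_jcf :
    ∃ A : Subgroup G, A.Normal ∧ IsMulCommutative A ∧ A.index = jordanConstantFin G :=
  Nat.sInf_mem jcf_nonempty

lemma le_jcf {n : ℕ}
    (h : ∀ A : Subgroup G, A.Normal → IsMulCommutative A → n ≤ A.index) :
    n ≤ jordanConstantFin G := by
  refine le_csInf jcf_nonempty ?_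
  rintro k ⟨A, h1, h2, rfl⟩
  exact h A h1 h2

lemma one_le_jcf [Finite G] : 1 ≤ jordanConstantFin G :=
  le_jcf fun A _ _ => Nat.one_le_iff_ne_zero.mpr A.index_ne_zero_of_finite

lemma jcf_eq_one_of_comm [Finite G] (h : ∀ a b : G, a * b = b * a) :
    jordanConstantFin G = 1 := by
  refine le_antisymm ?_ one_le_jcf
  have : IsMulCommutative (⊤ : Subgroup G) := ⟨⟨fun a b => Subtype.ext (h a b)⟩⟩
  simpa [Subgroup.index_top] using jcf_le (A := (⊤ : Subgroup G)) inferInstance this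

end JCF

section NC

variable {Γ : Type*} [Group Γ]

/-- `A` is an abelian subgroup of `K`, normalized by `K`, phrased elementwise. -/
structure IsNCIn (A K : Subgroup Γ) : Prop where
  le : A ≤ K
  conj : ∀ {k a : Γ}, k ∈ K → a ∈ A → k * a * k⁻¹ ∈ A
  comm : ∀ {a b : Γ}, a ∈ A → b ∈ A → a * b = b * a

lemma IsNCIn.normal_subgroupOf {A K : Subgroup Γ} (h : IsNCIn A K) :
    (A.subgroupOf K).Normal := by
  constructor
  intro a ha g
  rw [Subgroup.mem_subgroupOf] at ha ⊢
  push_cast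
  exact h.conj g.2 ha

lemma IsNCIn.isCommutative_subgroupOf {A K : Subgroup Γ} (h : IsNCIn A K) :
    IsMulCommutative (A.subgroupOf K) := by
  constructor
  constructor
  intro a b
  refine Subtype.ext (Subtype.ext ?_)
  have ha : ((a : ↥K) : Γ) ∈ A := a.2
  have hb : ((b : ↥K) : Γ) ∈ A := b.2
  push_cast
  exact h.comm ha hb

lemma IsNCIn.jcf_le {A K : Subgroup Γ} (h : IsNCIn A K) :
    jordanConstantFin ↥K ≤ (A.subgroupOf K).index :=
  _root_.jcf_le h.normal_subgroupOf h.isCommutative_subgroupOf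

lemma exists_isNCIn (K : Subgroup Γ) :
    ∃ A : Subgroup Γ, IsNCIn A K ∧
      (A.subgroupOf K).index = jordanConstantFin ↥K := by
  obtain ⟨B, hn, hc, hi⟩ := exists_jcf (G := ↥K)
  refine ⟨B.map K.subtype, ⟨?_, ?_, ?_⟩, ?_⟩
  · exact (Subgroup.map_subtype_le B)
  · rintro k a hk ⟨b, hb, rfl⟩
    refine ⟨⟨k, hk⟩ * b * ⟨k, hk⟩⁻¹, hn.conj_mem b hb ⟨k, hk⟩, ?_⟩
    push_cast
    rfl
  · rintro a b ⟨a', ha', rfl⟩ ⟨b', hb', rfl⟩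
    haveI := hc
    have := Subgroup.mul_comm_of_mem_isMulCommutative (H := B) ha' hb'
    exact congrArg (K.subtype) this
  · rw [Subgroup.subgroupOf, Subgroup.comap_map_eq_self_of_injective K.subtype_injective, hi]

end NC

section W

open SemidirectProduct

variable {Γ : Type*} [Group Γ]

/-- abbreviation for the wreath-type product -/
abbrev Wr (Γ : Type*) [Group Γ] := (Γ × Γ) ⋊[swapAction Γ] Multiplicative (ZMod 2)

/-- The nontrivial element of `Multiplicative (ZMod 2)`. -/
abbrev sg : Multiplicative (ZMod 2) := Multiplicative.ofAdd 1

lemma z_cases (z : Multiplicative (ZMod 2)) : z = 1 ∨ z = sg := by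
  have : ∀ w : Multiplicative (ZMod 2), w = 1 ∨ w = sg := by decide
  exact this z

lemma sg_mul_sg : sg * sg = 1 := by decide

lemma sg_inv : sg⁻¹ = sg := by decide

lemma sg_ne_one : sg ≠ 1 := by decide

lemma swapAction_one' (n : Γ × Γ) : swapAction Γ 1 n = n := by
  rw [map_one]; rfl

lemma swapAction_sg (n : Γ × Γ) : swapAction Γ sg n = n.swap := rfl

lemma mk_mul_mk (n₁ n₂ : Γ × Γ) (z₁ z₂ : Multiplicative (ZMod 2)) :
    (⟨n₁, z₁⟩ : Wr Γ) * ⟨n₂, z₂⟩ = ⟨n₁ * swapAction Γ z₁ n₂, z₁ * z₂⟩ := rfl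

lemma mk_mul_mk_one (x y x' y' : Γ) :
    (⟨(x, y), 1⟩ : Wr Γ) * ⟨(x', y'), 1⟩ = ⟨(x * x', y * y'), 1⟩ := by
  rw [mk_mul_mk, swapAction_one', one_mul]
  rfl

lemma mk_mul_mk_sg (x y x' y' : Γ) :
    (⟨(x, y), sg⟩ : Wr Γ) * ⟨(x', y'), 1⟩ = ⟨(x * y', y * x'), sg * 1⟩ := by
  rw [mk_mul_mk, swapAction_sg]
  rfl

lemma mk_inv_one (x y : Γ) : (⟨(x, y), 1⟩ : Wr Γ)⁻¹ = ⟨(x⁻¹, y⁻¹), 1⟩ := by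
  ext <;> simp [swapAction_one']

lemma mk_inv_sg (x y : Γ) : (⟨(x, y), sg⟩ : Wr Γ)⁻¹ = ⟨(y⁻¹, x⁻¹), sg⟩ := by
  ext <;> simp [sg_inv, swapAction_sg]

lemma mk_mul_mk_sgsg (x y x' y' : Γ) :
    (⟨(x, y), sg⟩ : Wr Γ) * ⟨(x', y'), sg⟩ = ⟨(x * y', y * x'), sg * sg⟩ := by
  rw [mk_mul_mk, swapAction_sg]
  rfl

lemma eta (w : Wr Γ) : w = ⟨(w.left.1, w.left.2), w.right⟩ := by
  ext <;> rfl

lemma conj_one_one (a w : Wr Γ) (ha : a.right = 1) (hw : w.right = 1) :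
    a * w * a⁻¹ =
      ⟨(a.left.1 * w.left.1 * a.left.1⁻¹, a.left.2 * w.left.2 * a.left.2⁻¹), 1⟩ := by
  rw [eta a, eta w, ha, hw, mk_inv_one, mk_mul_mk_one, mk_mul_mk_one]

lemma conj_sg_one (a w : Wr Γ) (ha : a.right = sg) (hw : w.right = 1) :
    a * w * a⁻¹ =
      ⟨(a.left.1 * w.left.2 * a.left.1⁻¹, a.left.2 * w.left.1 * a.left.2⁻¹), 1⟩ := by
  rw [eta a, eta w, ha, hw, mk_inv_sg, mk_mul_mk_sg, mul_one, mk_mul_mk_sgsg, sg_mul_sg]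

lemma conj_inv_sg_one (a w : Wr Γ) (ha : a.right = sg) (hw : w.right = 1) :
    a⁻¹ * w * a =
      ⟨(a.left.2⁻¹ * w.left.2 * a.left.2, a.left.1⁻¹ * w.left.1 * a.left.1), 1⟩ := by
  rw [eta a, eta w, ha, hw, mk_inv_sg, mk_mul_mk_sg, mul_one, mk_mul_mk_sgsg, sg_mul_sg]

lemma mul_sg_sg (a w : Wr Γ) (ha : a.right = sg) (hw : w.right = sg) :
    a * w = ⟨(a.left.1 * w.left.2, a.left.2 * w.left.1), 1⟩ := by
  rw [eta a, eta w, ha, hw, mk_mul_mk_sgsg, sg_mul_sg]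

/-- subgroup of elements with coordinates in `P₁ × P₂` and trivial swap part. -/
def prodBot (P₁ P₂ : Subgroup Γ) : Subgroup (Wr Γ) where
  carrier := {w | w.left.1 ∈ P₁ ∧ w.left.2 ∈ P₂ ∧ w.right = 1}
  one_mem' := ⟨one_mem _, one_mem _, rfl⟩
  mul_mem' := by
    rintro a b ⟨a1, a2, a3⟩ ⟨b1, b2, b3⟩
    refine ⟨?_, ?_, ?_⟩ <;>
      simp only [mul_left, mul_right, a3, b3, swapAction_one', mul_one]
    · exact mul_mem a1 b1
    · exact mul_mem a2 b2
  inv_mem' := by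
    rintro a ⟨a1, a2, a3⟩
    refine ⟨?_, ?_, ?_⟩ <;>
      simp only [inv_left, inv_right, a3, inv_one, swapAction_one', Prod.fst_inv,
        Prod.snd_inv]
    · exact inv_mem a1
    · exact inv_mem a2

lemma mem_prodBot {P₁ P₂ : Subgroup Γ} {w : Wr Γ} :
    w ∈ prodBot P₁ P₂ ↔ w.left.1 ∈ P₁ ∧ w.left.2 ∈ P₂ ∧ w.right = 1 := Iff.rfl

/-- subgroup of elements with both coordinates in `K`, any swap part. -/
def prodFull (K : Subgroup Γ) : Subgroup (Wr Γ) where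
  carrier := {w | w.left.1 ∈ K ∧ w.left.2 ∈ K}
  one_mem' := ⟨one_mem _, one_mem _⟩
  mul_mem' := by
    rintro a b ⟨a1, a2⟩ ⟨b1, b2⟩
    rcases z_cases a.right with h | h <;>
      refine ⟨?_, ?_⟩ <;>
        simp only [mul_left, h, swapAction_one', swapAction_sg, Prod.fst_mul,
          Prod.snd_mul, Prod.fst_swap, Prod.snd_swap]
    · exact mul_mem a1 b1
    · exact mul_mem a2 b2
    · exact mul_mem a1 b2
    · exact mul_mem a2 b1
  inv_mem' := by
    rintro a ⟨a1, a2⟩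
    rcases z_cases a.right with h | h <;>
      refine ⟨?_, ?_⟩ <;>
        simp only [inv_left, inv_right, h, inv_one, sg_inv, swapAction_one',
          swapAction_sg, Prod.fst_inv, Prod.snd_inv, Prod.fst_swap, Prod.snd_swap]
    · exact inv_mem a1
    · exact inv_mem a2
    · exact inv_mem a2
    · exact inv_mem a1

lemma mem_prodFull {K : Subgroup Γ} {w : Wr Γ} :
    w ∈ prodFull K ↔ w.left.1 ∈ K ∧ w.left.2 ∈ K := Iff.rfl

/-- first-coordinate projection of the "trivial swap part" piece of a subgroup of `Wr Γ`. -/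
def proj1 (H : Subgroup (Wr Γ)) : Subgroup Γ where
  carrier := {x | ∃ y, (⟨(x, y), 1⟩ : Wr Γ) ∈ H}
  one_mem' := ⟨1, H.one_mem⟩
  mul_mem' := by
    rintro a b ⟨ya, ha⟩ ⟨yb, hb⟩
    exact ⟨ya * yb, by rw [← mk_mul_mk_one]; exact H.mul_mem ha hb⟩
  inv_mem' := by
    rintro a ⟨ya, ha⟩
    exact ⟨ya⁻¹, by rw [← mk_inv_one]; exact H.inv_mem ha⟩

/-- second-coordinate projection of the "trivial swap part" piece of a subgroup of `Wr Γ`. -/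
def proj2 (H : Subgroup (Wr Γ)) : Subgroup Γ where
  carrier := {y | ∃ x, (⟨(x, y), 1⟩ : Wr Γ) ∈ H}
  one_mem' := ⟨1, H.one_mem⟩
  mul_mem' := by
    rintro a b ⟨xa, ha⟩ ⟨xb, hb⟩
    exact ⟨xa * xb, by rw [← mk_mul_mk_one]; exact H.mul_mem ha hb⟩
  inv_mem' := by
    rintro a ⟨xa, ha⟩
    exact ⟨xa⁻¹, by rw [← mk_inv_one]; exact H.inv_mem ha⟩

lemma left_mem_proj1 {H : Subgroup (Wr Γ)} {w : Wr Γ} (hw : w ∈ H) (h1 : w.right = 1) :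
    w.left.1 ∈ proj1 H :=
  ⟨w.left.2, by rw [← h1, ← eta w]; exact hw⟩

lemma left_mem_proj2 {H : Subgroup (Wr Γ)} {w : Wr Γ} (hw : w ∈ H) (h1 : w.right = 1) :
    w.left.2 ∈ proj2 H :=
  ⟨w.left.1, by rw [← h1, ← eta w]; exact hw⟩

lemma finite_proj1 {H : Subgroup (Wr Γ)} (hH : (H : Set (Wr Γ)).Finite) :
    ((proj1 H : Set Γ)).Finite := by
  haveI : Finite ↥H := hH.to_subtype
  haveI : Finite ↥(proj1 H) := by
    refine Finite.of_injective
      (fun x : ↥(proj1 H) => (⟨⟨(x, x.2.choose), 1⟩, x.2.choose_spec⟩ : ↥H)) ?_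
    intro x x' h
    have := congrArg (fun w : ↥H => (w : Wr Γ).left.1) h
    exact Subtype.ext this
  exact Set.toFinite _

lemma finite_proj2 {H : Subgroup (Wr Γ)} (hH : (H : Set (Wr Γ)).Finite) :
    ((proj2 H : Set Γ)).Finite := by
  haveI : Finite ↥H := hH.to_subtype
  haveI : Finite ↥(proj2 H) := by
    refine Finite.of_injective
      (fun x : ↥(proj2 H) => (⟨⟨(x.2.choose, x), 1⟩, x.2.choose_spec⟩ : ↥H)) ?_
    intro x x' h
    have := congrArg (fun w : ↥H => (w : Wr Γ).left.2) h
    exact Subtype.ext this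
  exact Set.toFinite _

lemma finite_prodFull {K : Subgroup Γ} (hK : (K : Set Γ).Finite) :
    ((prodFull K : Set (Wr Γ))).Finite := by
  haveI : Finite ↥K := hK.to_subtype
  haveI : Finite ↥(prodFull K) := by
    refine Finite.of_injective
      (fun w : ↥(prodFull K) =>
        ((⟨(w : Wr Γ).left.1, w.2.1⟩ : ↥K), (⟨(w : Wr Γ).left.2, w.2.2⟩ : ↥K),
          (w : Wr Γ).right)) ?_
    intro w w' h
    rw [Prod.ext_iff, Prod.ext_iff] at h
    obtain ⟨h1, h2, h3⟩ := h
    refine Subtype.ext (SemidirectProduct.ext ?_ h3)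
    exact Prod.ext (congrArg Subtype.val h1) (congrArg Subtype.val h2)
  exact Set.toFinite _

/-- conjugate subgroup `g A g⁻¹` described by membership `g⁻¹ * x * g ∈ A`. -/
def conjSG (g : Γ) (A : Subgroup Γ) : Subgroup Γ where
  carrier := {x | g⁻¹ * x * g ∈ A}
  one_mem' := by simpa using A.one_mem
  mul_mem' := by
    intro a b ha hb
    have := A.mul_mem ha hb
    simpa [mul_assoc] using this
  inv_mem' := by
    intro a ha
    have := A.inv_mem ha
    simpa [mul_assoc] using this

lemma mem_conjSG {g x : Γ} {A : Subgroup Γ} : x ∈ conjSG g A ↔ g⁻¹ * x * g ∈ A := Iff.rfl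

end W

section Helpers

variable {X : Type*} [Group X]

lemma index_subgroupOf_le_of_ker {Q : Type*} [Group Q] [Finite Q]
    {G₂ G₁ : Subgroup X} (f : ↥G₁ →* Q) (h : f.ker = G₂.subgroupOf G₁) :
    (G₂.subgroupOf G₁).index ≤ Nat.card Q := by
  rw [← h, Subgroup.index_ker]
  exact Subgroup.card_le_card_group _

lemma index_subgroupOf_eq_of_ker {Q : Type*} [Group Q] [Finite Q]
    {G₂ G₁ : Subgroup X} (f : ↥G₁ →* Q) (h : f.ker = G₂.subgroupOf G₁)
    (hs : Function.Surjective f) :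
    (G₂.subgroupOf G₁).index = Nat.card Q := by
  rw [← h, Subgroup.index_ker, MonoidHom.range_eq_top.2 hs]
  exact Subgroup.card_top

lemma index_chain {H C D₁ D₂ : Subgroup X} (h1 : C ≤ D₁) (h2 : D₁ ≤ D₂)
    (h3 : D₂ ≤ H) :
    (C.subgroupOf H).index =
      (C.subgroupOf D₁).index * (D₁.subgroupOf D₂).index * (D₂.subgroupOf H).index := by
  have e1 := Subgroup.relIndex_mul_relIndex C D₁ D₂ h1 h2
  have e2 := Subgroup.relIndex_mul_relIndex C D₂ H (h1.trans h2) h3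
  show C.relIndex H = C.relIndex D₁ * D₁.relIndex D₂ * D₂.relIndex H
  rw [e1, e2]

lemma jcf_le_subgroupOf {H C : Subgroup X}
    (hnorm : ∀ h ∈ H, ∀ w ∈ C, h * w * h⁻¹ ∈ C)
    (hcomm : ∀ w ∈ C, ∀ w' ∈ C, w * w' = w' * w) :
    jordanConstantFin ↥H ≤ (C.subgroupOf H).index := by
  have hn : (C.subgroupOf H).Normal := by
    constructor
    intro b hb g
    rw [Subgroup.mem_subgroupOf] at hb ⊢
    push_cast
    exact hnorm g g.2 _ hb
  have hc : IsMulCommutative (C.subgroupOf H) := by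
    constructor; constructor
    intro a b
    refine Subtype.ext (Subtype.ext ?_)
    push_cast
    exact hcomm _ (Subgroup.mem_subgroupOf.mp a.2) _ (Subgroup.mem_subgroupOf.mp b.2)
  exact jcf_le hn hc

lemma conj_cancel {g a b : X} (h : g⁻¹ * a * g = g⁻¹ * b * g) : a = b :=
  mul_left_cancel (mul_right_cancel h)

end Helpers

section CoordHoms

variable {Γ : Type*} [Group Γ]

/-- first coordinate hom on a subgroup with trivial swap parts -/
def coordHom1 (S : Subgroup (Wr Γ)) (K : Subgroup Γ)
    (hz : ∀ w ∈ S, w.right = 1) (hm : ∀ w ∈ S, w.left.1 ∈ K) : ↥S →* ↥K :=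
  MonoidHom.mk' (fun w => ⟨(w : Wr Γ).left.1, hm w w.2⟩)
    (fun a b => Subtype.ext (by
      show ((a * b : ↥S) : Wr Γ).left.1 = (a : Wr Γ).left.1 * (b : Wr Γ).left.1
      push_cast
      simp [hz a a.2, swapAction_one']))

/-- second coordinate hom on a subgroup with trivial swap parts -/
def coordHom2 (S : Subgroup (Wr Γ)) (K : Subgroup Γ)
    (hz : ∀ w ∈ S, w.right = 1) (hm : ∀ w ∈ S, w.left.2 ∈ K) : ↥S →* ↥K :=
  MonoidHom.mk' (fun w => ⟨(w : Wr Γ).left.2, hm w w.2⟩)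
    (fun a b => Subtype.ext (by
      show ((a * b : ↥S) : Wr Γ).left.2 = (a : Wr Γ).left.2 * (b : Wr Γ).left.2
      push_cast
      simp [hz a a.2, swapAction_one']))

/-- conjugated first coordinate hom on a subgroup with trivial swap parts -/
def conjCoordHom1 (S : Subgroup (Wr Γ)) (K : Subgroup Γ) (g : Γ)
    (hz : ∀ w ∈ S, w.right = 1) (hm : ∀ w ∈ S, g⁻¹ * w.left.1 * g ∈ K) : ↥S →* ↥K :=
  MonoidHom.mk' (fun w => ⟨g⁻¹ * (w : Wr Γ).left.1 * g, hm w w.2⟩)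
    (fun a b => Subtype.ext (by
      show g⁻¹ * ((a * b : ↥S) : Wr Γ).left.1 * g =
        (g⁻¹ * (a : Wr Γ).left.1 * g) * (g⁻¹ * (b : Wr Γ).left.1 * g)
      push_cast
      simp [hz a a.2, swapAction_one', mul_assoc]))

end CoordHoms

section Bounds

variable {Γ : Type*} [Group Γ]

lemma card_mzmod2 : Nat.card (Multiplicative (ZMod 2)) = 2 := by
  simp [Nat.card_eq_fintype_card]

lemma bound3_ker {H : Subgroup (Wr Γ)} :
    (SemidirectProduct.rightHom.comp H.subtype).ker =
      (prodBot ⊤ ⊤ ⊓ H).subgroupOf H := by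
  ext w
  rw [MonoidHom.mem_ker, Subgroup.mem_subgroupOf]
  change (↑w : Wr Γ).right = 1 ↔ _
  constructor
  · intro h; exact ⟨⟨trivial, trivial, h⟩, w.2⟩
  · rintro ⟨⟨-, -, h⟩, -⟩; exact h

lemma bound3_le {H : Subgroup (Wr Γ)} :
    ((prodBot ⊤ ⊤ ⊓ H).subgroupOf H).index ≤ 2 := by
  have := index_subgroupOf_le_of_ker (SemidirectProduct.rightHom.comp H.subtype) bound3_ker
  rwa [card_mzmod2] at this

lemma bound3_eq {H : Subgroup (Wr Γ)} (hs : (⟨(1, 1), sg⟩ : Wr Γ) ∈ H) :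
    ((prodBot ⊤ ⊤ ⊓ H).subgroupOf H).index = 2 := by
  have hsurj : Function.Surjective (SemidirectProduct.rightHom.comp H.subtype) := by
    intro z
    rcases z_cases z with rfl | rfl
    · exact ⟨1, rfl⟩
    · exact ⟨⟨⟨(1, 1), sg⟩, hs⟩, rfl⟩
  have := index_subgroupOf_eq_of_ker (SemidirectProduct.rightHom.comp H.subtype)
    bound3_ker hsurj
  rwa [card_mzmod2] at this

lemma bound2_ker {H : Subgroup (Wr Γ)} {A K : Subgroup Γ}
    (hn : (A.subgroupOf K).Normal)
    (hm : ∀ w ∈ prodBot ⊤ ⊤ ⊓ H, w.left.2 ∈ K) :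
    haveI := hn
    ((QuotientGroup.mk' (A.subgroupOf K)).comp
      (coordHom2 (prodBot ⊤ ⊤ ⊓ H) K (fun w hw => hw.1.2.2) hm)).ker =
        (prodBot ⊤ A ⊓ H).subgroupOf (prodBot ⊤ ⊤ ⊓ H) := by
  haveI := hn
  ext w
  rw [MonoidHom.mem_ker, MonoidHom.comp_apply, QuotientGroup.mk'_apply,
    QuotientGroup.eq_one_iff, Subgroup.mem_subgroupOf, Subgroup.mem_subgroupOf]
  change ((w : Wr Γ).left.2 ∈ A) ↔ _
  constructor
  · intro h; exact ⟨⟨trivial, h, w.2.1.2.2⟩, w.2.2⟩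
  · rintro ⟨⟨-, h, -⟩, -⟩; exact h

lemma bound2_le {H : Subgroup (Wr Γ)} {A K : Subgroup Γ}
    (hn : (A.subgroupOf K).Normal) [Finite ↥K]
    (hm : ∀ w ∈ prodBot ⊤ ⊤ ⊓ H, w.left.2 ∈ K) :
    ((prodBot ⊤ A ⊓ H).subgroupOf (prodBot ⊤ ⊤ ⊓ H)).index ≤
      (A.subgroupOf K).index := by
  haveI := hn
  haveI : Finite (↥K ⧸ A.subgroupOf K) := Quotient.finite _
  exact index_subgroupOf_le_of_ker _ (bound2_ker hn hm)

lemma bound2_eq {H : Subgroup (Wr Γ)} {A K : Subgroup Γ}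
    (hn : (A.subgroupOf K).Normal) [Finite ↥K]
    (hm : ∀ w ∈ prodBot ⊤ ⊤ ⊓ H, w.left.2 ∈ K)
    (hsurj : ∀ y ∈ K, (⟨(1, y), 1⟩ : Wr Γ) ∈ H) :
    ((prodBot ⊤ A ⊓ H).subgroupOf (prodBot ⊤ ⊤ ⊓ H)).index =
      (A.subgroupOf K).index := by
  haveI := hn
  haveI : Finite (↥K ⧸ A.subgroupOf K) := Quotient.finite _
  refine index_subgroupOf_eq_of_ker _ (bound2_ker hn hm) ?_
  rw [MonoidHom.coe_comp]
  refine Function.Surjective.comp (QuotientGroup.mk'_surjective _) ?_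
  intro k
  exact ⟨⟨⟨(1, (k : Γ)), 1⟩, ⟨⟨trivial, trivial, rfl⟩, hsurj _ k.2⟩⟩, Subtype.ext rfl⟩

lemma bound1_ker {H : Subgroup (Wr Γ)} {A₁ A₂ K : Subgroup Γ}
    (hn : (A₁.subgroupOf K).Normal)
    (hm : ∀ w ∈ prodBot ⊤ A₂ ⊓ H, w.left.1 ∈ K) :
    haveI := hn
    ((QuotientGroup.mk' (A₁.subgroupOf K)).comp
      (coordHom1 (prodBot ⊤ A₂ ⊓ H) K (fun w hw => hw.1.2.2) hm)).ker =
        (prodBot A₁ A₂ ⊓ H).subgroupOf (prodBot ⊤ A₂ ⊓ H) := by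
  haveI := hn
  ext w
  rw [MonoidHom.mem_ker, MonoidHom.comp_apply, QuotientGroup.mk'_apply,
    QuotientGroup.eq_one_iff, Subgroup.mem_subgroupOf, Subgroup.mem_subgroupOf]
  change ((w : Wr Γ).left.1 ∈ A₁) ↔ _
  constructor
  · intro h; exact ⟨⟨h, w.2.1.2.1, w.2.1.2.2⟩, w.2.2⟩
  · rintro ⟨⟨h, -, -⟩, -⟩; exact h

lemma bound1_le {H : Subgroup (Wr Γ)} {A₁ A₂ K : Subgroup Γ}
    (hn : (A₁.subgroupOf K).Normal) [Finite ↥K]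
    (hm : ∀ w ∈ prodBot ⊤ A₂ ⊓ H, w.left.1 ∈ K) :
    ((prodBot A₁ A₂ ⊓ H).subgroupOf (prodBot ⊤ A₂ ⊓ H)).index ≤
      (A₁.subgroupOf K).index := by
  haveI := hn
  haveI : Finite (↥K ⧸ A₁.subgroupOf K) := Quotient.finite _
  exact index_subgroupOf_le_of_ker _ (bound1_ker hn hm)

lemma bound1_eq {H : Subgroup (Wr Γ)} {A₁ A₂ K : Subgroup Γ}
    (hn : (A₁.subgroupOf K).Normal) [Finite ↥K]
    (hm : ∀ w ∈ prodBot ⊤ A₂ ⊓ H, w.left.1 ∈ K)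
    (hA₂ : (1 : Γ) ∈ A₂)
    (hsurj : ∀ x ∈ K, (⟨(x, 1), 1⟩ : Wr Γ) ∈ H) :
    ((prodBot A₁ A₂ ⊓ H).subgroupOf (prodBot ⊤ A₂ ⊓ H)).index =
      (A₁.subgroupOf K).index := by
  haveI := hn
  haveI : Finite (↥K ⧸ A₁.subgroupOf K) := Quotient.finite _
  refine index_subgroupOf_eq_of_ker _ (bound1_ker hn hm) ?_
  rw [MonoidHom.coe_comp]
  refine Function.Surjective.comp (QuotientGroup.mk'_surjective _) ?_
  intro k
  exact ⟨⟨⟨((k : Γ), 1), 1⟩, ⟨⟨trivial, hA₂, rfl⟩, hsurj _ k.2⟩⟩, Subtype.ext rfl⟩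

lemma bound1_conj_ker {H : Subgroup (Wr Γ)} {A₂ K : Subgroup Γ} {g₁ : Γ}
    (hn : (A₂.subgroupOf K).Normal)
    (hm : ∀ w ∈ prodBot ⊤ A₂ ⊓ H, g₁⁻¹ * w.left.1 * g₁ ∈ K) :
    haveI := hn
    ((QuotientGroup.mk' (A₂.subgroupOf K)).comp
      (conjCoordHom1 (prodBot ⊤ A₂ ⊓ H) K g₁ (fun w hw => hw.1.2.2) hm)).ker =
        (prodBot (conjSG g₁ A₂) A₂ ⊓ H).subgroupOf (prodBot ⊤ A₂ ⊓ H) := by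
  haveI := hn
  ext w
  rw [MonoidHom.mem_ker, MonoidHom.comp_apply, QuotientGroup.mk'_apply,
    QuotientGroup.eq_one_iff, Subgroup.mem_subgroupOf, Subgroup.mem_subgroupOf]
  change (g₁⁻¹ * (w : Wr Γ).left.1 * g₁ ∈ A₂) ↔ _
  constructor
  · intro h; exact ⟨⟨h, w.2.1.2.1, w.2.1.2.2⟩, w.2.2⟩
  · rintro ⟨⟨h, -, -⟩, -⟩; exact h

lemma bound1_conj_le {H : Subgroup (Wr Γ)} {A₂ K : Subgroup Γ} {g₁ : Γ}
    (hn : (A₂.subgroupOf K).Normal) [Finite ↥K]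
    (hm : ∀ w ∈ prodBot ⊤ A₂ ⊓ H, g₁⁻¹ * w.left.1 * g₁ ∈ K) :
    ((prodBot (conjSG g₁ A₂) A₂ ⊓ H).subgroupOf (prodBot ⊤ A₂ ⊓ H)).index ≤
      (A₂.subgroupOf K).index := by
  haveI := hn
  haveI : Finite (↥K ⧸ A₂.subgroupOf K) := Quotient.finite _
  exact index_subgroupOf_le_of_ker _ (bound1_conj_ker hn hm)

lemma prodBot_le_prodBot {P₁ P₂ Q₁ Q₂ : Subgroup Γ} (h1 : P₁ ≤ Q₁) (h2 : P₂ ≤ Q₂) :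
    prodBot P₁ P₂ ≤ prodBot Q₁ Q₂ := by
  rintro w ⟨w1, w2, w3⟩
  exact ⟨h1 w1, h2 w2, w3⟩

end Bounds

section W2

variable {Γ : Type*} [Group Γ]

lemma mk_mul_mk_one_sg (x y x' y' : Γ) :
    (⟨(x, y), 1⟩ : Wr Γ) * ⟨(x', y'), sg⟩ = ⟨(x * x', y * y'), sg⟩ := by
  rw [mk_mul_mk, swapAction_one', one_mul]
  rfl

lemma inv_sg' (a : Wr Γ) (ha : a.right = sg) :
    a⁻¹ = ⟨(a.left.2⁻¹, a.left.1⁻¹), sg⟩ := by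
  rw [eta a, ha, mk_inv_sg]

lemma inv_mul_sg_sg (a w : Wr Γ) (ha : a.right = sg) (hw : w.right = sg) :
    a⁻¹ * w = ⟨(a.left.2⁻¹ * w.left.2, a.left.1⁻¹ * w.left.1), 1⟩ := by
  rw [inv_sg' a ha, eta w, hw, mk_mul_mk_sgsg, sg_mul_sg]

lemma mul_sg_sg'' (a w : Wr Γ) (ha : a.right = sg) (hw : w.right = sg) :
    a * w = ⟨(a.left.1 * w.left.2, a.left.2 * w.left.1), 1⟩ :=
  mul_sg_sg a w ha hw

lemma commutator_calc (x : Γ) (t : Wr Γ) (ht : t.right = sg) :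
    (⟨(x, 1), 1⟩ : Wr Γ) * t * (⟨(x, 1), 1⟩ : Wr Γ)⁻¹ * t⁻¹ =
      ⟨(x, t.left.2 * x⁻¹ * t.left.2⁻¹), 1⟩ := by
  rw [inv_sg' t ht, mk_inv_one, eta t, ht, mk_mul_mk_one_sg, mk_mul_mk_sg, mul_one,
    mk_mul_mk_sgsg, sg_mul_sg]
  ext <;> simp [mul_assoc]

end W2

section UB

variable {Γ : Type*} [Group Γ]

lemma jcf_le_of_finite (hJ : IsJordanGroup Γ) {H : Subgroup (Wr Γ)}
    (hH : (H : Set (Wr Γ)).Finite) :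
    jordanConstantFin ↥H ≤ 2 * (jordanConstant Γ) ^ 2 := by
  classical
  have hK₂fin := finite_proj2 (H := H) hH
  haveI : Finite ↥(proj2 H) := hK₂fin.to_subtype
  obtain ⟨A₂, hA₂, hA₂i⟩ := exists_isNCIn (proj2 H)
  have hA₂J : (A₂.subgroupOf (proj2 H)).index ≤ jordanConstant Γ := by
    rw [hA₂i]
    exact le_csSup hJ ⟨proj2 H, hK₂fin, rfl⟩
  by_cases hsw : ∀ w ∈ H, w.right = (1 : Multiplicative (ZMod 2))
  · -- no swap-type element in H
    have hK₁fin := finite_proj1 (H := H) hH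
    haveI : Finite ↥(proj1 H) := hK₁fin.to_subtype
    obtain ⟨A₁, hA₁, hA₁i⟩ := exists_isNCIn (proj1 H)
    have hA₁J : (A₁.subgroupOf (proj1 H)).index ≤ jordanConstant Γ := by
      rw [hA₁i]
      exact le_csSup hJ ⟨proj1 H, hK₁fin, rfl⟩
    have hnorm : ∀ h ∈ H, ∀ w ∈ prodBot A₁ A₂ ⊓ H, h * w * h⁻¹ ∈ prodBot A₁ A₂ ⊓ H := by
      rintro h hh w ⟨⟨w1, w2, w3⟩, whH⟩
      refine ⟨?_, H.mul_mem (H.mul_mem hh whH) (H.inv_mem hh)⟩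
      rw [conj_one_one h w (hsw h hh) w3]
      exact ⟨hA₁.conj (left_mem_proj1 hh (hsw h hh)) w1,
        hA₂.conj (left_mem_proj2 hh (hsw h hh)) w2, rfl⟩
    have hcomm : ∀ w ∈ prodBot A₁ A₂ ⊓ H, ∀ w' ∈ prodBot A₁ A₂ ⊓ H,
        w * w' = w' * w := by
      rintro w ⟨⟨w1, w2, w3⟩, -⟩ w' ⟨⟨w1', w2', w3'⟩, -⟩
      rw [eta w, eta w', w3, w3', mk_mul_mk_one, mk_mul_mk_one]
      exact SemidirectProduct.ext (Prod.ext (hA₁.comm w1 w1') (hA₂.comm w2 w2')) rfl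
    refine le_trans (jcf_le_subgroupOf hnorm hcomm) ?_
    rw [index_chain (D₁ := prodBot ⊤ A₂ ⊓ H) (D₂ := prodBot ⊤ ⊤ ⊓ H)
      (inf_le_inf_right H (prodBot_le_prodBot le_top le_rfl))
      (inf_le_inf_right H (prodBot_le_prodBot le_rfl le_top))
      inf_le_right]
    have b1 := bound1_le (H := H) (A₂ := A₂) hA₁.normal_subgroupOf
      (fun w hw => left_mem_proj1 hw.2 hw.1.2.2)
    have b2 := bound2_le (H := H) hA₂.normal_subgroupOf
      (fun w hw => left_mem_proj2 hw.2 hw.1.2.2)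
    have b3 := bound3_le (H := H)
    calc ((prodBot A₁ A₂ ⊓ H).subgroupOf (prodBot ⊤ A₂ ⊓ H)).index *
          ((prodBot ⊤ A₂ ⊓ H).subgroupOf (prodBot ⊤ ⊤ ⊓ H)).index *
          ((prodBot ⊤ ⊤ ⊓ H).subgroupOf H).index
        ≤ jordanConstant Γ * jordanConstant Γ * 2 :=
          Nat.mul_le_mul (Nat.mul_le_mul (le_trans b1 hA₁J) (le_trans b2 hA₂J)) b3
      _ = 2 * jordanConstant Γ ^ 2 := by ring
  · -- H contains a swap-type element t
    push_neg at hsw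
    obtain ⟨t, ht, htr⟩ := hsw
    have tr : t.right = sg := (z_cases t.right).resolve_left htr
    have F1 : ∀ a ∈ proj1 H, t.left.1⁻¹ * a * t.left.1 ∈ proj2 H := by
      rintro a ⟨b', hab⟩
      have hm := mul_mem (mul_mem (inv_mem ht) hab) ht
      rw [conj_inv_sg_one t _ tr rfl] at hm
      exact ⟨_, hm⟩
    have F2a : ∀ h ∈ H, h.right = sg → t.left.1⁻¹ * h.left.1 ∈ proj2 H := by
      intro h hh hr
      have hm := mul_mem (inv_mem ht) hh
      rw [inv_mul_sg_sg t h tr hr] at hm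
      exact ⟨_, hm⟩
    have F2b : ∀ h ∈ H, h.right = sg → h.left.2 * t.left.1 ∈ proj2 H := by
      intro h hh hr
      have hm := mul_mem hh ht
      rw [mul_sg_sg h t hr tr] at hm
      exact ⟨_, hm⟩
    have hnorm : ∀ h ∈ H, ∀ w ∈ prodBot (conjSG t.left.1 A₂) A₂ ⊓ H,
        h * w * h⁻¹ ∈ prodBot (conjSG t.left.1 A₂) A₂ ⊓ H := by
      rintro h hh w ⟨⟨w1, w2, w3⟩, whH⟩
      refine ⟨?_, H.mul_mem (H.mul_mem hh whH) (H.inv_mem hh)⟩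
      rcases z_cases h.right with h1 | h1
      · rw [conj_one_one h w h1 w3]
        refine ⟨?_, hA₂.conj (left_mem_proj2 hh h1) w2, rfl⟩
        rw [mem_conjSG]
        have e : t.left.1⁻¹ * (h.left.1 * w.left.1 * h.left.1⁻¹) * t.left.1 =
            (t.left.1⁻¹ * h.left.1 * t.left.1) * (t.left.1⁻¹ * w.left.1 * t.left.1) *
              (t.left.1⁻¹ * h.left.1 * t.left.1)⁻¹ := by group
        rw [e]
        exact hA₂.conj (F1 _ (left_mem_proj1 hh h1)) w1
      · rw [conj_sg_one h w h1 w3]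
        refine ⟨?_, ?_, rfl⟩
        · rw [mem_conjSG]
          have e : t.left.1⁻¹ * (h.left.1 * w.left.2 * h.left.1⁻¹) * t.left.1 =
              (t.left.1⁻¹ * h.left.1) * w.left.2 * (t.left.1⁻¹ * h.left.1)⁻¹ := by group
          rw [e]
          exact hA₂.conj (F2a h hh h1) w2
        · have e : h.left.2 * w.left.1 * h.left.2⁻¹ =
              (h.left.2 * t.left.1) * (t.left.1⁻¹ * w.left.1 * t.left.1) *
                (h.left.2 * t.left.1)⁻¹ := by group
          rw [e]
          exact hA₂.conj (F2b h hh h1) w1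
    have hcomm : ∀ w ∈ prodBot (conjSG t.left.1 A₂) A₂ ⊓ H,
        ∀ w' ∈ prodBot (conjSG t.left.1 A₂) A₂ ⊓ H, w * w' = w' * w := by
      rintro w ⟨⟨w1, w2, w3⟩, -⟩ w' ⟨⟨w1', w2', w3'⟩, -⟩
      rw [eta w, eta w', w3, w3', mk_mul_mk_one, mk_mul_mk_one]
      refine SemidirectProduct.ext (Prod.ext ?_ (hA₂.comm w2 w2')) rfl
      refine conj_cancel (g := t.left.1) ?_
      have e : ∀ u v : Γ, t.left.1⁻¹ * (u * v) * t.left.1 =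
          (t.left.1⁻¹ * u * t.left.1) * (t.left.1⁻¹ * v * t.left.1) := by
        intro u v; group
      rw [e, e]
      exact hA₂.comm w1 w1'
    refine le_trans (jcf_le_subgroupOf hnorm hcomm) ?_
    rw [index_chain (D₁ := prodBot ⊤ A₂ ⊓ H) (D₂ := prodBot ⊤ ⊤ ⊓ H)
      (inf_le_inf_right H (prodBot_le_prodBot le_top le_rfl))
      (inf_le_inf_right H (prodBot_le_prodBot le_rfl le_top))
      inf_le_right]
    have b1 := bound1_conj_le (H := H) (g₁ := t.left.1) hA₂.normal_subgroupOf
      (fun w hw => F1 _ (left_mem_proj1 hw.2 hw.1.2.2))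
    have b2 := bound2_le (H := H) hA₂.normal_subgroupOf
      (fun w hw => left_mem_proj2 hw.2 hw.1.2.2)
    have b3 := bound3_le (H := H)
    calc ((prodBot (conjSG t.left.1 A₂) A₂ ⊓ H).subgroupOf (prodBot ⊤ A₂ ⊓ H)).index *
          ((prodBot ⊤ A₂ ⊓ H).subgroupOf (prodBot ⊤ ⊤ ⊓ H)).index *
          ((prodBot ⊤ ⊤ ⊓ H).subgroupOf H).index
        ≤ jordanConstant Γ * jordanConstant Γ * 2 :=
          Nat.mul_le_mul (Nat.mul_le_mul (le_trans b1 hA₂J) (le_trans b2 hA₂J)) b3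
      _ = 2 * jordanConstant Γ ^ 2 := by ring

end UB

section Example

variable {Γ : Type*} [Group Γ]

lemma jcf_prodFull_ge {K : Subgroup Γ} (hKfin : (K : Set Γ).Finite) (hKne : K ≠ ⊥) :
    2 * (jordanConstantFin ↥K) ^ 2 ≤ jordanConstantFin ↥(prodFull K) := by
  classical
  haveI : Finite ↥K := hKfin.to_subtype
  haveI : Finite ↥(prodFull K) := (finite_prodFull hKfin).to_subtype
  refine le_jcf ?_
  intro B hn hc
  haveI := hn
  haveI := hc
  have hBpos : 0 < B.index := Nat.pos_of_ne_zero B.index_ne_zero_of_finite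
  by_cases hsw : ∀ b : ↥(prodFull K), b ∈ B → ((b : Wr Γ)).right = 1
  · -- B has no swap-type element
    set Q := proj1 (B.map (prodFull K).subtype) with hQdef
    have hQK : Q ≤ K := by
      rintro x ⟨y, b, hb, hbe⟩
      rw [Subgroup.coe_subtype] at hbe
      have := b.2
      rw [hbe] at this
      exact this.1
    have hQnc : IsNCIn Q K := by
      refine ⟨hQK, ?_, ?_⟩
      · rintro k x hk ⟨y, b, hb, hbe⟩
        set u : ↥(prodFull K) := ⟨⟨(k, 1), 1⟩, ⟨hk, one_mem K⟩⟩ with hu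
        rw [Subgroup.coe_subtype] at hbe
        refine ⟨1 * y * 1⁻¹, u * b * u⁻¹, hn.conj_mem b hb u, ?_⟩
        rw [Subgroup.coe_subtype]
        push_cast
        rw [hbe, conj_one_one _ _ rfl rfl]
      · rintro x x' ⟨y, b, hb, hbe⟩ ⟨y', b', hb', hbe'⟩
        rw [Subgroup.coe_subtype] at hbe hbe'
        have hcm := Subgroup.mul_comm_of_mem_isMulCommutative (H := B) hb hb'
        have e : (b : Wr Γ) * (b' : Wr Γ) = (b' : Wr Γ) * (b : Wr Γ) := by
          have := congrArg (Subtype.val) hcm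
          push_cast at this
          exact this
        rw [hbe, hbe', mk_mul_mk_one, mk_mul_mk_one] at e
        exact congrArg (fun w : Wr Γ => w.left.1) e
    have hBle : B ≤ (prodBot Q Q ⊓ prodFull K).subgroupOf (prodFull K) := by
      intro b hb
      rw [Subgroup.mem_subgroupOf]
      have hb1 : (↑b : Wr Γ) = ⟨((b : Wr Γ).left.1, (b : Wr Γ).left.2), 1⟩ := by
        rw [← hsw b hb]
      refine ⟨⟨?_, ?_, hsw b hb⟩, b.2⟩
      · exact ⟨(b : Wr Γ).left.2, b, hb, by rw [Subgroup.coe_subtype]; exact hb1⟩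
      · set s : ↥(prodFull K) := ⟨⟨(1, 1), sg⟩, ⟨one_mem K, one_mem K⟩⟩ with hs
        have hcb := hn.conj_mem b hb s
        have e : ((s * b * s⁻¹ : ↥(prodFull K)) : Wr Γ) =
            ⟨((b : Wr Γ).left.2, (b : Wr Γ).left.1), 1⟩ := by
          push_cast
          rw [conj_sg_one _ _ rfl (hsw b hb)]
          ext <;> simp [hs]
        exact ⟨(b : Wr Γ).left.1, s * b * s⁻¹, hcb, by rw [Subgroup.coe_subtype]; exact e⟩
    have hq : jordanConstantFin ↥K ≤ (Q.subgroupOf K).index := hQnc.jcf_le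
    have hchain : ((prodBot Q Q ⊓ prodFull K).subgroupOf (prodFull K)).index =
        (Q.subgroupOf K).index * (Q.subgroupOf K).index * 2 := by
      rw [index_chain (D₁ := prodBot ⊤ Q ⊓ prodFull K) (D₂ := prodBot ⊤ ⊤ ⊓ prodFull K)
        (inf_le_inf_right _ (prodBot_le_prodBot le_top le_rfl))
        (inf_le_inf_right _ (prodBot_le_prodBot le_rfl le_top))
        inf_le_right]
      rw [bound1_eq (H := prodFull K) hQnc.normal_subgroupOf (fun w hw => hw.2.1)
        (one_mem Q) (fun x hx => ⟨hx, one_mem K⟩)]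
      rw [bound2_eq (H := prodFull K) hQnc.normal_subgroupOf (fun w hw => hw.2.2)
        (fun y hy => ⟨one_mem K, hy⟩)]
      rw [bound3_eq (H := prodFull K) ⟨one_mem K, one_mem K⟩]
    have hle : ((prodBot Q Q ⊓ prodFull K).subgroupOf (prodFull K)).index ≤ B.index :=
      Nat.le_of_dvd hBpos (Subgroup.index_dvd_of_le hBle)
    calc 2 * (jordanConstantFin ↥K) ^ 2
        = jordanConstantFin ↥K * jordanConstantFin ↥K * 2 := by ring
      _ ≤ (Q.subgroupOf K).index * (Q.subgroupOf K).index * 2 :=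
          Nat.mul_le_mul (Nat.mul_le_mul hq hq) le_rfl
      _ = ((prodBot Q Q ⊓ prodFull K).subgroupOf (prodFull K)).index := hchain.symm
      _ ≤ B.index := hle
  · -- B contains a swap-type element
    push_neg at hsw
    obtain ⟨b, hb, hbr⟩ := hsw
    have tr : ((b : Wr Γ)).right = sg := (z_cases _).resolve_left hbr
    have hKcomm : ∀ x ∈ K, ∀ y ∈ K, x * y = y * x := by
      have key : ∀ x ∈ K, ∃ c ∈ B, (c : Wr Γ) =
          ⟨(x, (b : Wr Γ).left.2 * x⁻¹ * (b : Wr Γ).left.2⁻¹), 1⟩ := by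
        intro x hx
        set u : ↥(prodFull K) := ⟨⟨(x, 1), 1⟩, ⟨hx, one_mem K⟩⟩ with hu
        refine ⟨u * b * u⁻¹ * b⁻¹, B.mul_mem (hn.conj_mem b hb u) (B.inv_mem hb), ?_⟩
        push_cast
        exact commutator_calc x (b : Wr Γ) tr
      intro x hx y hy
      obtain ⟨cx, hcx, ex⟩ := key x hx
      obtain ⟨cy, hcy, ey⟩ := key y hy
      have hcm := Subgroup.mul_comm_of_mem_isMulCommutative (H := B) hcx hcy
      have e : (cx : Wr Γ) * (cy : Wr Γ) = (cy : Wr Γ) * (cx : Wr Γ) := by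
        have := congrArg (Subtype.val) hcm
        push_cast at this
        exact this
      rw [ex, ey, mk_mul_mk_one, mk_mul_mk_one] at e
      exact congrArg (fun w : Wr Γ => w.left.1) e
    have hjcf1 : jordanConstantFin ↥K = 1 :=
      jcf_eq_one_of_comm (fun a b => Subtype.ext (hKcomm _ a.2 _ b.2))
    obtain ⟨k, hkK, hk1⟩ : ∃ k ∈ K, k ≠ 1 := by
      rcases Subgroup.bot_or_exists_ne_one K with h | h
      · exact absurd h hKne
      · exact h
    have hne : B ≠ ⊤ := by
      intro htop
      have h1 : (⟨⟨(k, 1), 1⟩, ⟨hkK, one_mem K⟩⟩ : ↥(prodFull K)) ∈ B := by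
        rw [htop]; trivial
      have h2 : (⟨⟨(1, 1), sg⟩, ⟨one_mem K, one_mem K⟩⟩ : ↥(prodFull K)) ∈ B := by
        rw [htop]; trivial
      have hcm := Subgroup.mul_comm_of_mem_isMulCommutative (H := B) h1 h2
      have e : (⟨(k, 1), 1⟩ : Wr Γ) * ⟨(1, 1), sg⟩ = (⟨(1, 1), sg⟩ : Wr Γ) * ⟨(k, 1), 1⟩ := by
        have := congrArg (Subtype.val) hcm
        push_cast at this
        exact this
      rw [mk_mul_mk_one_sg, mk_mul_mk_sg] at e
      have := congrArg (fun w : Wr Γ => w.left.1) e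
      simp at this
      exact hk1 this
    have h2i : 2 ≤ B.index := Subgroup.one_lt_index_of_ne_top hne
    rw [hjcf1]
    simpa using h2i

end Example

section Main

variable {Γ : Type*} [Group Γ]

lemma jcf_bot : jordanConstantFin ↥(⊥ : Subgroup Γ) = 1 := by
  haveI : Finite ↥(⊥ : Subgroup Γ) := inferInstance
  exact jcf_eq_one_of_comm (fun a b => Subsingleton.elim _ _)

end Main

theorem jordanConstant_wreath_of_jordan' (Γ : Type*) [Group Γ] (hJ : IsJordanGroup Γ)
    (hfin : ∃ K : Subgroup Γ, (K : Set Γ).Finite ∧ K ≠ ⊥) :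
    IsJordanGroup ((Γ × Γ) ⋊[swapAction Γ] Multiplicative (ZMod 2)) ∧
      jordanConstant ((Γ × Γ) ⋊[swapAction Γ] Multiplicative (ZMod 2)) =
        2 * (jordanConstant Γ) ^ 2 := by
  classical
  obtain ⟨K₀, hK₀fin, hK₀ne⟩ := hfin
  have hC₀ : jordanConstantFin ↥K₀ ∈ jordanSet Γ := ⟨K₀, hK₀fin, rfl⟩
  have hJ1 : 1 ≤ jordanConstant Γ := by
    haveI : Finite ↥K₀ := hK₀fin.to_subtype
    exact le_trans one_le_jcf (le_csSup hJ hC₀)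
  obtain ⟨K, hKfin, hKne, hKjcf⟩ :
      ∃ K : Subgroup Γ, (K : Set Γ).Finite ∧ K ≠ ⊥ ∧
        jordanConstantFin ↥K = jordanConstant Γ := by
    rcases eq_or_lt_of_le hJ1 with h1 | h2
    · refine ⟨K₀, hK₀fin, hK₀ne, ?_⟩
      haveI : Finite ↥K₀ := hK₀fin.to_subtype
      exact le_antisymm (le_csSup hJ hC₀) (h1 ▸ one_le_jcf)
    · have hmem : jordanConstant Γ ∈ jordanSet Γ := Nat.sSup_mem ⟨_, hC₀⟩ hJ
      obtain ⟨K, hKf, hKj⟩ := hmem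
      refine ⟨K, hKf, ?_, hKj⟩
      intro hbot
      rw [hbot, jcf_bot] at hKj
      omega
  have hUB : ∀ m ∈ jordanSet (Wr Γ), m ≤ 2 * jordanConstant Γ ^ 2 := by
    rintro m ⟨H, hHfin, rfl⟩
    exact jcf_le_of_finite hJ hHfin
  have hbdd : IsJordanGroup (Wr Γ) := ⟨2 * jordanConstant Γ ^ 2, fun m hm => hUB m hm⟩
  refine ⟨hbdd, ?_⟩
  have hmemW : jordanConstantFin ↥(prodFull K) ∈ jordanSet (Wr Γ) :=
    ⟨prodFull K, finite_prodFull hKfin, rfl⟩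
  refine le_antisymm (csSup_le ⟨_, hmemW⟩ hUB) ?_
  calc 2 * jordanConstant Γ ^ 2 = 2 * (jordanConstantFin ↥K) ^ 2 := by rw [hKjcf]
    _ ≤ jordanConstantFin ↥(prodFull K) := jcf_prodFull_ge hKfin hKne
    _ ≤ jordanConstant (Wr Γ) := le_csSup hbdd hmemW

/-- If Γ is a Jordan group containing a nontrivial finite subgroup, then
(Γ × Γ) ⋊ ℤ/2ℤ (with ℤ/2ℤ swapping the factors) is Jordan with Jordan constant
2 · J(Γ)². -/
theorem jordanConstant_wreath_of_jordan (Γ : Type*) [Group Γ] (hJ : IsJordanGroup Γ)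
    (hfin : ∃ K : Subgroup Γ, (K : Set Γ).Finite ∧ K ≠ ⊥) :
    IsJordanGroup ((Γ × Γ) ⋊[swapAction Γ] Multiplicative (ZMod 2)) ∧
      jordanConstant ((Γ × Γ) ⋊[swapAction Γ] Multiplicative (ZMod 2)) =
        2 * (jordanConstant Γ) ^ 2 :=
  jordanConstant_wreath_of_jordan' Γ hJ hfin
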